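/- Let R be a Noetherian ring and M a finitely generated R-module. There is a one-to-one correspondence between the minimal primes of the Rees algebra R(M) and the minimal primes of R, given by contraction P ↦ P ∩ R. -/
import Mathlib


noncomputable section

open TensorAlgebra in
/-- The relation defining the symmetric algebra as a quotient of the tensor algebra. -/
inductive SymRel (R : Type*) [CommRing R] (M : Type*) [AddCommGroup M] [Module R M] :
    TensorAlgebra R M → TensorAlgebra R M → Prop
  | mul_comm (x y : M) : SymRel R M (ι R x * ι R y) (ι R y * ι R x)

/-- The symmetric algebra of a module. -/
abbrev SymmAlg (R : Type*) [CommRing R] (M : Type*) [AddCommGroup M] [Module R M] :=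
  RingQuot (SymRel R M)

variable (R : Type*) [CommRing R] {M N : Type*} [AddCommGroup M] [Module R M]
  [AddCommGroup N] [Module R N]

/-- The canonical inclusion of `M` in degree one of its symmetric algebra. -/
def SymmAlg.ι : M →ₗ[R] SymmAlg R M :=
  (RingQuot.mkAlgHom R (SymRel R M)).toLinearMap ∘ₗ TensorAlgebra.ι R

instance : CommRing (SymmAlg R M) :=
  { (inferInstance : Ring (SymmAlg R M)) with
    mul_comm := by
      have key : ∀ x y : TensorAlgebra R M,
          RingQuot.mkAlgHom R (SymRel R M) x * RingQuot.mkAlgHom R (SymRel R M) y =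
          RingQuot.mkAlgHom R (SymRel R M) y * RingQuot.mkAlgHom R (SymRel R M) x := by
        intro x y
        induction x using TensorAlgebra.induction with
        | algebraMap r => simp [Algebra.commutes]
        | ι m =>
          induction y using TensorAlgebra.induction with
          | algebraMap r => simp [Algebra.commutes]
          | ι m' =>
            have h := RingQuot.mkAlgHom_rel R (SymRel.mul_comm (R := R) m m')
            simpa only [map_mul] using h
          | add a b ha hb => simp only [map_add, add_mul, mul_add, ha, hb]
          | mul a b ha hb =>
            simp only [map_mul, ← mul_assoc, ha]
            rw [mul_assoc _ _ (RingQuot.mkAlgHom R (SymRel R M) b), hb, mul_assoc]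
        | add a b ha hb => simp only [map_add, add_mul, mul_add, ha, hb]
        | mul a b ha hb =>
          simp only [map_mul, mul_assoc, hb]
          rw [← mul_assoc, ha, mul_assoc]
      intro a b
      obtain ⟨x, rfl⟩ := RingQuot.mkAlgHom_surjective R (SymRel R M) a
      obtain ⟨y, rfl⟩ := RingQuot.mkAlgHom_surjective R (SymRel R M) b
      exact key x y }

theorem SymmAlg.ι_mul_comm (x y : M) :
    SymmAlg.ι R x * SymmAlg.ι R y = SymmAlg.ι R y * SymmAlg.ι R x := mul_comm _ _

/-- Functoriality of the symmetric algebra. -/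
def SymmAlg.map (f : M →ₗ[R] N) : SymmAlg R M →ₐ[R] SymmAlg R N :=
  RingQuot.liftAlgHom R ⟨TensorAlgebra.lift R ((SymmAlg.ι R).comp f), by
    intro x y h
    cases h with
    | mul_comm a b => simp [mul_comm]⟩

universe w
/-- A map to a free module is versal if every map to a free module factors through it. -/
def IsVersal {R : Type*} [CommRing R] {M F : Type*} [AddCommGroup M] [Module R M]
    [AddCommGroup F] [Module R F] (f : M →ₗ[R] F) : Prop :=
  ∀ (G : Type w) [AddCommGroup G] [Module R G] [Module.Free R G] (g : M →ₗ[R] G),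
    ∃ h : F →ₗ[R] G, h ∘ₗ f = g

section Equiv

open MvPolynomial

variable (n : ℕ)

/-- The linear map sending `v` to `∑ i, v i • X i`. -/
def linToMv : (Fin n → R) →ₗ[R] MvPolynomial (Fin n) R where
  toFun v := ∑ i, C (v i) * X i
  map_add' x y := by simp [add_mul, Finset.sum_add_distrib]
  map_smul' c x := by simp [smul_eq_C_mul, Finset.mul_sum, mul_assoc]

/-- The algebra map from the symmetric algebra of a free module to polynomials. -/
def toMv : SymmAlg R (Fin n → R) →ₐ[R] MvPolynomial (Fin n) R :=
  RingQuot.liftAlgHom R ⟨TensorAlgebra.lift R (linToMv R n), by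
    intro x y h
    cases h with
    | mul_comm a b => simp [mul_comm]⟩

theorem toMv_ι (v : Fin n → R) : toMv R n (SymmAlg.ι R v) = linToMv R n v := by
  simp [toMv, SymmAlg.ι, RingQuot.liftAlgHom_mkAlgHom_apply]

/-- The algebra map from polynomials to the symmetric algebra. -/
def fromMv : MvPolynomial (Fin n) R →ₐ[R] SymmAlg R (Fin n → R) :=
  MvPolynomial.aeval (fun i => SymmAlg.ι R (Pi.single i 1))

theorem SymmAlg.algHom_ext {A : Type*} [Semiring A] [Algebra R A]
    {g₁ g₂ : SymmAlg R M →ₐ[R] A} (h : ∀ m, g₁ (SymmAlg.ι R m) = g₂ (SymmAlg.ι R m)) :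
    g₁ = g₂ := by
  suffices hs : g₁.comp (RingQuot.mkAlgHom R (SymRel R M)) =
      g₂.comp (RingQuot.mkAlgHom R (SymRel R M)) by
    refine AlgHom.ext fun x => ?_
    obtain ⟨y, rfl⟩ := RingQuot.mkAlgHom_surjective R (SymRel R M) x
    exact DFunLike.congr_fun hs y
  apply TensorAlgebra.hom_ext
  ext m
  simpa [SymmAlg.ι] using h m

/-- The symmetric algebra of a finite free module is a polynomial ring. -/
def symmAlgEquivMv : SymmAlg R (Fin n → R) ≃ₐ[R] MvPolynomial (Fin n) R := by
  refine AlgEquiv.ofAlgHom (toMv R n) (fromMv R n) ?_ ?_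
  · apply MvPolynomial.algHom_ext
    intro i
    simp only [AlgHom.comp_apply, AlgHom.id_apply, fromMv, MvPolynomial.aeval_X]
    rw [toMv_ι]
    simp only [linToMv, LinearMap.coe_mk, AddHom.coe_mk]
    rw [Finset.sum_eq_single i]
    · rw [Pi.single_eq_same, map_one, one_mul]
    · intro j _ hj
      simp [Pi.single_apply, hj]
    · simp
  · apply SymmAlg.algHom_ext
    intro v
    simp only [AlgHom.comp_apply, AlgHom.id_apply, toMv_ι]
    simp only [linToMv, LinearMap.coe_mk, AddHom.coe_mk, map_sum, map_mul, fromMv,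
      MvPolynomial.aeval_X, MvPolynomial.aeval_C]
    have : ∀ i, algebraMap R (SymmAlg R (Fin n → R)) (v i) * SymmAlg.ι R (Pi.single i 1)
        = SymmAlg.ι R (Pi.single i (v i)) := by
      intro i
      rw [Algebra.algebraMap_eq_smul_one, smul_mul_assoc, one_mul, ← map_smul]
      congr 1
      rw [← Pi.single_smul, smul_eq_mul, mul_one]
    simp_rw [this, ← map_sum, Finset.univ_sum_single]

end Equiv

section MvFacts

open MvPolynomial

variable {R' : Type*} [CommRing R'] {n : ℕ}

theorem RA.isPrime_map_C (p : Ideal R') [p.IsPrime] :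
    (p.map (C : R' →+* MvPolynomial (Fin n) R')).IsPrime := by
  rw [← Ideal.Quotient.isDomain_iff_prime]
  exact MulEquiv.isDomain (MvPolynomial (Fin n) (R' ⧸ p))
    (quotientEquivQuotientMvPolynomial (σ := Fin n) p).symm.toMulEquiv

theorem RA.comap_map_C (p : Ideal R') [p.IsPrime] :
    (p.map (C : R' →+* MvPolynomial (Fin n) R')).comap C = p := by
  refine le_antisymm ?_ Ideal.le_comap_map
  intro x hx
  have hker : p.map (C : R' →+* MvPolynomial (Fin n) R') ≤
      RingHom.ker ((Ideal.Quotient.mk p).comp (constantCoeff (σ := Fin n))) := by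
    rw [Ideal.map_le_iff_le_comap]
    intro a ha
    simp [RingHom.mem_ker, Ideal.Quotient.eq_zero_iff_mem, ha]
  simpa [RingHom.mem_ker, Ideal.Quotient.eq_zero_iff_mem] using hker hx

/-- Every minimal prime of `MvPolynomial (Fin n) R` is `map C` of a minimal prime of `R`. -/
theorem RA.minPrime_structure (q : Ideal (MvPolynomial (Fin n) R'))
    (hq : q ∈ minimalPrimes (MvPolynomial (Fin n) R')) :
    q.comap (C : R' →+* MvPolynomial (Fin n) R') ∈ minimalPrimes R' ∧
      q = (q.comap (C : R' →+* MvPolynomial (Fin n) R')).map C := by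
  have hqp : q.IsPrime := hq.1.1
  have : (q.comap (C : R' →+* MvPolynomial (Fin n) R')).IsPrime := hqp.comap C
  obtain ⟨p₀, hp₀, hle⟩ := Ideal.exists_minimalPrimes_le
    (J := q.comap (C : R' →+* MvPolynomial (Fin n) R')) bot_le
  have hp₀p : p₀.IsPrime := hp₀.1.1
  have hmap : p₀.map (C : R' →+* MvPolynomial (Fin n) R') ≤ q := by
    rw [Ideal.map_le_iff_le_comap]; exact hle
  have hqeq : q = p₀.map (C : R' →+* MvPolynomial (Fin n) R') :=
    le_antisymm (hq.2 ⟨RA.isPrime_map_C p₀, bot_le⟩ hmap) hmap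
  have hcomap : q.comap (C : R' →+* MvPolynomial (Fin n) R') = p₀ := by
    rw [hqeq, RA.comap_map_C]
  rw [hcomap]
  exact ⟨hp₀, hqeq⟩

/-- Every minimal prime of `R` comes from a minimal prime of `MvPolynomial (Fin n) R`. -/
theorem RA.minPrime_exists (p : Ideal R') (hp : p ∈ minimalPrimes R') :
    ∃ q ∈ minimalPrimes (MvPolynomial (Fin n) R'),
      q.comap (C : R' →+* MvPolynomial (Fin n) R') = p := by
  have hpp : p.IsPrime := hp.1.1
  have : (p.map (C : R' →+* MvPolynomial (Fin n) R')).IsPrime := RA.isPrime_map_C p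
  obtain ⟨q, hq, hle⟩ := Ideal.exists_minimalPrimes_le
    (J := p.map (C : R' →+* MvPolynomial (Fin n) R')) bot_le
  refine ⟨q, hq, ?_⟩
  have h1 := (RA.minPrime_structure q hq).1
  have h2 : q.comap (C : R' →+* MvPolynomial (Fin n) R') ≤ p := by
    calc q.comap (C : R' →+* MvPolynomial (Fin n) R')
        ≤ (p.map (C : R' →+* MvPolynomial (Fin n) R')).comap C := Ideal.comap_mono hle
      _ = p := RA.comap_map_C p
  exact le_antisymm h2 (hp.2 ⟨h1.1.1, bot_le⟩ h2)

section
variable {S' : Type*} [CommRing S'] (φ : S' →+* MvPolynomial (Fin n) R') (ψ : R' →+* S')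

/-- Every minimal prime of a subring of a polynomial ring is a contraction of a
minimal prime of the polynomial ring. -/
theorem RA.key (hφ : Function.Injective φ) (Q : Ideal S') (hQ : Q ∈ minimalPrimes S') :
    ∃ q ∈ minimalPrimes (MvPolynomial (Fin n) R'), Q = q.comap φ := by
  obtain ⟨q', hq'p, hq'⟩ := Ideal.exists_comap_eq_of_mem_minimalPrimes_of_injective hφ Q hQ
  obtain ⟨q, hq, hle⟩ := Ideal.exists_minimalPrimes_le (J := q') bot_le
  have hqp : q.IsPrime := hq.1.1
  have h1 : q.comap φ ≤ Q := hq' ▸ Ideal.comap_mono hle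
  exact ⟨q, hq, le_antisymm (hQ.2 ⟨hqp.comap φ, bot_le⟩ h1) h1⟩

theorem RA.abstract_bijOn (hφ : Function.Injective φ) (hC : φ.comp ψ = C) :
    Set.BijOn (fun Q : Ideal S' => Q.comap ψ) (minimalPrimes S') (minimalPrimes R') := by
  have hcc : ∀ q : Ideal (MvPolynomial (Fin n) R'), (q.comap φ).comap ψ = q.comap C := by
    intro q; rw [Ideal.comap_comap, hC]
  refine ⟨?_, ?_, ?_⟩
  · intro Q hQ
    obtain ⟨q, hq, rfl⟩ := RA.key φ hφ Q hQ
    show (q.comap φ).comap ψ ∈ minimalPrimes R'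
    rw [hcc]
    exact (RA.minPrime_structure q hq).1
  · intro Q₁ h₁ Q₂ h₂ he
    obtain ⟨q₁, hq₁, rfl⟩ := RA.key φ hφ Q₁ h₁
    obtain ⟨q₂, hq₂, rfl⟩ := RA.key φ hφ Q₂ h₂
    simp only [Ideal.comap_comap, hC] at he
    have : q₁ = q₂ := by
      rw [(RA.minPrime_structure q₁ hq₁).2, (RA.minPrime_structure q₂ hq₂).2, he]
    rw [this]
  · intro p hp
    obtain ⟨q, hq, hqc⟩ := RA.minPrime_exists p hp
    have hqp : q.IsPrime := hq.1.1
    refine ⟨q.comap φ, ?_, by show (q.comap φ).comap ψ = p; rw [hcc, hqc]⟩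
    have hQp : (q.comap φ).IsPrime := hqp.comap φ
    obtain ⟨Q₀, hQ₀, hle⟩ := Ideal.exists_minimalPrimes_le (J := q.comap φ) bot_le
    obtain ⟨q₀, hq₀, rfl⟩ := RA.key φ hφ Q₀ hQ₀
    have hps : q₀.comap C ∈ minimalPrimes R' := (RA.minPrime_structure q₀ hq₀).1
    have hle' : q₀.comap (C : R' →+* MvPolynomial (Fin n) R') ≤ p := by
      rw [← hqc, ← hcc, ← hcc]; exact Ideal.comap_mono hle
    have hpeq : q₀.comap (C : R' →+* MvPolynomial (Fin n) R') = p :=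
      le_antisymm hle' (hp.2 ⟨hps.1.1, bot_le⟩ hle')
    have : q₀ = q := by
      rw [(RA.minPrime_structure q₀ hq₀).2, (RA.minPrime_structure q hq).2, hpeq, hqc]
    rwa [← this]
end

end MvFacts

/-- Contraction gives a bijection between the minimal primes of the Rees algebra `R(M)`
(the image of `Sym(f)` for a versal map `f` to a finite free module) and those of `R`. -/
theorem bijOn_minimalPrimes_reesAlgebra {R : Type*} [CommRing R] [IsNoetherianRing R]
    {M : Type*} [AddCommGroup M] [Module R M] [Module.Finite R M]
    (n : ℕ) (f : M →ₗ[R] (Fin n → R)) (hf : IsVersal f) :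
    Set.BijOn (fun P : Ideal ↥(SymmAlg.map R f).range =>
        P.comap (algebraMap R ↥(SymmAlg.map R f).range))
      (minimalPrimes ↥(SymmAlg.map R f).range) (minimalPrimes R) := by
  set S := (SymmAlg.map R f).range with hS
  let e := symmAlgEquivMv R n
  let Φ : ↥S →ₐ[R] MvPolynomial (Fin n) R := e.toAlgHom.comp S.val
  have hφ : Function.Injective (Φ.toRingHom) := by
    intro x y h
    exact Subtype.ext (e.injective h)
  have hC : (Φ.toRingHom).comp (algebraMap R ↥S) = MvPolynomial.C := by
    ext r
    have := Φ.commutes r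
    simpa [MvPolynomial.algebraMap_eq] using this
  exact RA.abstract_bijOn Φ.toRingHom (algebraMap R ↥S) hφ hC
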